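/- For every ε > 0 there exists δ > 0 with the following property: let x ∈ ℝ, y > 0, and let H be a strictly increasing continuous map on [x−y, x+y] which is (1+δ)-quasisymmetric on [x−y, x+y], i.e. (1+δ)⁻¹ ≤ (H(u+s) − H(u))/(H(u) − H(u−s)) ≤ 1+δ whenever u−s, u, u+s ∈ [x−y, x+y] and s > 0. Then for every k with 0 < k ≤ 1, both |(H(x+ky) − H(x))/(H(x) − H(x−y)) − k| ≤ ε and |(H(x) − H(x−ky))/(H(x+y) − H(x)) − k| ≤ ε. -/

import Mathlib

lemma qs_halves (δ A B : ℝ) (hδ : 0 ≤ δ) (hA : 0 < A) (hB : 0 < B)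
    (h1 : (1+δ)⁻¹ ≤ B/A) (h2 : B/A ≤ 1+δ) :
    (2+δ)⁻¹ * (A+B) ≤ A ∧ (2+δ)⁻¹ * (A+B) ≤ B := by
  have hd1 : (0:ℝ) < 1 + δ := by linarith
  have hd2 : (0:ℝ) < 2 + δ := by linarith
  have hBA : B ≤ (1+δ) * A := by
    rw [div_le_iff₀ hA] at h2; linarith
  have hAB : A ≤ (1+δ) * B := by
    have := (le_div_iff₀ hA).mp h1
    nlinarith [mul_le_mul_of_nonneg_left this hd1.le, mul_inv_cancel₀ hd1.ne']
  constructor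
  · rw [inv_mul_le_iff₀ hd2]; nlinarith
  · rw [inv_mul_le_iff₀ hd2]; nlinarith

lemma qs_grid (δ : ℝ) (hδ : 0 ≤ δ) (G : ℝ → ℝ)
    (hpos : ∀ p q : ℝ, 0 ≤ p → p < q → q ≤ 1 → 0 < G q - G p)
    (hhalf : ∀ p q : ℝ, 0 ≤ p → p < q → q ≤ 1 →
      (1+δ)⁻¹ ≤ (G q - G ((p+q)/2)) / (G ((p+q)/2) - G p) ∧
        (G q - G ((p+q)/2)) / (G ((p+q)/2) - G p) ≤ 1+δ) :
    ∀ n : ℕ, ∀ j : ℕ, j < 2^n →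
      ((2+δ)⁻¹)^n * (G 1 - G 0) ≤ G ((j+1:ℕ)/2^n) - G ((j:ℕ)/2^n) := by
  have hstep : ∀ p q : ℝ, 0 ≤ p → p < q → q ≤ 1 →
      (2+δ)⁻¹ * (G q - G p) ≤ G ((p+q)/2) - G p ∧
        (2+δ)⁻¹ * (G q - G p) ≤ G q - G ((p+q)/2) := by
    intro p q hp hpq hq
    have hm1 : p < (p+q)/2 := by linarith
    have hm2 : (p+q)/2 < q := by linarith
    have hA : 0 < G ((p+q)/2) - G p := hpos p _ hp hm1 (by linarith)
    have hB : 0 < G q - G ((p+q)/2) := hpos _ q (by linarith) hm2 hq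
    have h := hhalf p q hp hpq hq
    have := qs_halves δ _ _ hδ hA hB h.1 h.2
    constructor
    · have := this.1; rw [show G ((p+q)/2) - G p + (G q - G ((p+q)/2)) = G q - G p by ring] at this
      linarith
    · have := this.2; rw [show G ((p+q)/2) - G p + (G q - G ((p+q)/2)) = G q - G p by ring] at this
      linarith
  intro n
  induction n with
  | zero =>
    intro j hj
    interval_cases j
    norm_num
  | succ n ih =>
    intro j hj
    have h2n : (0:ℝ) < 2^n := by positivity
    obtain ⟨i, hi_def⟩ : ∃ i, i = j / 2 := ⟨_, rfl⟩
    have hi : i < 2^n := by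
      rw [hi_def]
      have : j / 2 < 2^(n+1) / 2 := by
        apply Nat.div_lt_div_of_lt_of_dvd ⟨2^n, by ring⟩ hj
      simpa [pow_succ] using this
    have hp0 : (0:ℝ) ≤ (i:ℝ)/2^n := by positivity
    have hpq : (i:ℝ)/2^n < ((i:ℝ)+1)/2^n := by
      rw [div_lt_div_iff₀ h2n h2n]; nlinarith
    have hq1 : ((i:ℝ)+1)/2^n ≤ 1 := by
      rw [div_le_one h2n]
      have : (i:ℝ)+1 ≤ 2^n := by
        have : (i+1 : ℕ) ≤ 2^n := hi
        exact_mod_cast this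
      linarith
    have hmid : ((i:ℝ)/2^n + ((i:ℝ)+1)/2^n)/2 = (2*(i:ℝ)+1)/2^(n+1) := by
      rw [pow_succ]; field_simp; ring
    have hs := hstep ((i:ℝ)/2^n) (((i:ℝ)+1)/2^n) hp0 hpq hq1
    rw [hmid] at hs
    have hih : (2+δ)⁻¹^n * (G 1 - G 0) ≤ G (((i:ℝ)+1)/2^n) - G ((i:ℝ)/2^n) := by
      have := ih i hi
      push_cast at this
      exact this
    have hcpos : (0:ℝ) < (2+δ)⁻¹ := by rw [inv_pos]; linarith
    have hkey1 : (2+δ)⁻¹^(n+1) * (G 1 - G 0) ≤ G ((2*(i:ℝ)+1)/2^(n+1)) - G ((i:ℝ)/2^n) := by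
      calc (2+δ)⁻¹^(n+1) * (G 1 - G 0) = (2+δ)⁻¹ * ((2+δ)⁻¹^n * (G 1 - G 0)) := by ring
        _ ≤ (2+δ)⁻¹ * (G (((i:ℝ)+1)/2^n) - G ((i:ℝ)/2^n)) := by
            apply mul_le_mul_of_nonneg_left hih hcpos.le
        _ ≤ _ := hs.1
    have hkey2 : (2+δ)⁻¹^(n+1) * (G 1 - G 0) ≤ G (((i:ℝ)+1)/2^n) - G ((2*(i:ℝ)+1)/2^(n+1)) := by
      calc (2+δ)⁻¹^(n+1) * (G 1 - G 0) = (2+δ)⁻¹ * ((2+δ)⁻¹^n * (G 1 - G 0)) := by ring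
        _ ≤ (2+δ)⁻¹ * (G (((i:ℝ)+1)/2^n) - G ((i:ℝ)/2^n)) := by
            apply mul_le_mul_of_nonneg_left hih hcpos.le
        _ ≤ _ := hs.2
    rcases Nat.even_or_odd j with ⟨m, hm⟩ | ⟨m, hm⟩
    · -- j = 2m = 2i
      have him : i = m := by omega
      have e1 : ((j:ℕ):ℝ)/2^(n+1) = (i:ℝ)/2^n := by
        subst him; subst hm; push_cast; rw [pow_succ]; field_simp; ring
      have e2 : ((j+1:ℕ):ℝ)/2^(n+1) = (2*(i:ℝ)+1)/2^(n+1) := by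
        subst him; subst hm; push_cast; ring_nf
      rw [e1, e2]; exact hkey1
    · -- j = 2m+1, i = m
      have him : i = m := by omega
      have e1 : ((j:ℕ):ℝ)/2^(n+1) = (2*(i:ℝ)+1)/2^(n+1) := by
        subst him; subst hm; push_cast; ring_nf
      have e2 : ((j+1:ℕ):ℝ)/2^(n+1) = ((i:ℝ)+1)/2^n := by
        subst him; subst hm; push_cast; rw [pow_succ]; field_simp; ring
      rw [e1, e2]; exact hkey2

lemma qs_key (δ : ℝ) (hδ : 0 ≤ δ) (G : ℝ → ℝ)
    (hpos : ∀ p q : ℝ, 0 ≤ p → p < q → q ≤ 1 → 0 < G q - G p)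
    (hhalf : ∀ p q : ℝ, 0 ≤ p → p < q → q ≤ 1 →
      (1+δ)⁻¹ ≤ (G q - G ((p+q)/2)) / (G ((p+q)/2) - G p) ∧
        (G q - G ((p+q)/2)) / (G ((p+q)/2) - G p) ≤ 1+δ)
    (n : ℕ) (t : ℝ) (ht0 : 0 ≤ t) (ht1 : t ≤ 1) :
    |(G t - G 0)/(G 1 - G 0) - t| ≤ (1 - 2^n * ((2+δ)⁻¹)^n) + (1/2)^n := by
  have hgrid := qs_grid δ hδ G hpos hhalf
  have h2n : (0:ℝ) < 2^n := by positivity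
  have hD : 0 < G 1 - G 0 := hpos 0 1 le_rfl one_pos le_rfl
  set c : ℝ := (2+δ)⁻¹ with hc_def
  have hc0 : (0:ℝ) < c := by rw [hc_def, inv_pos]; linarith
  have hchalf : c ≤ 1/2 := by
    rw [hc_def]
    rw [inv_le_comm₀ (by linarith) (by norm_num)]
    norm_num; linarith
  have hcn2 : c^n ≤ (1/2)^n := pow_le_pow_left₀ hc0.le hchalf n
  have hcn0 : (0:ℝ) ≤ c^n := by positivity
  have hc2n : (2:ℝ)^n * c^n ≤ 1 := by
    calc (2:ℝ)^n * c^n ≤ (2:ℝ)^n * (1/2)^n := by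
          apply mul_le_mul_of_nonneg_left hcn2 (by positivity)
      _ = 1 := by rw [← mul_pow]; norm_num
  -- summation over grid
  have hsum : ∀ a b : ℕ, a ≤ b → b ≤ 2^n →
      ((b:ℝ) - a) * (c^n * (G 1 - G 0)) ≤ G ((b:ℕ)/2^n) - G ((a:ℕ)/2^n) := by
    intro a b hab hb2
    induction b, hab using Nat.le_induction with
    | base => simp
    | succ b hab ih =>
      have hb : b < 2^n := hb2
      have h1 := hgrid n b hb
      have h2 := ih (by omega)
      push_cast
      push_cast at h1 h2
      nlinarith
  -- monotonicity
  have hmono : ∀ p q : ℝ, 0 ≤ p → p ≤ q → q ≤ 1 → G p ≤ G q := by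
    intro p q hp hpq hq
    rcases eq_or_lt_of_le hpq with h | h
    · rw [h]
    · linarith [hpos p q hp h hq]
  -- choose grid index
  have h2n1 : 1 ≤ 2^n := Nat.one_le_two_pow
  obtain ⟨j, hj_def⟩ : ∃ j : ℕ, j = min ⌊t * 2^n⌋₊ (2^n - 1) := ⟨_, rfl⟩
  have htn0 : 0 ≤ t * 2^n := by positivity
  have hj3 : j + 1 ≤ 2^n := by omega
  have hj1 : (j:ℝ) ≤ t * 2^n := by
    have : j ≤ ⌊t * 2^n⌋₊ := by omega
    calc (j:ℝ) ≤ (⌊t * 2^n⌋₊ : ℝ) := by exact_mod_cast this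
      _ ≤ t * 2^n := Nat.floor_le htn0
  have hj2 : t * 2^n ≤ (j:ℝ) + 1 := by
    by_cases h : ⌊t * 2^n⌋₊ ≤ 2^n - 1
    · have hje : j = ⌊t * 2^n⌋₊ := by omega
      rw [hje]
      exact (Nat.lt_floor_add_one (t*2^n)).le
    · have hje : j = 2^n - 1 := by omega
      have h1 : ((j:ℝ)+1) = (2^n : ℕ) := by
        rw [hje]; push_cast [Nat.cast_sub h2n1]; ring
      rw [h1]
      push_cast
      nlinarith
  -- bounds on G t
  have hGl := hsum 0 j (Nat.zero_le _) (by omega)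
  have hGu := hsum (j+1) (2^n) hj3 le_rfl
  push_cast at hGl hGu
  rw [zero_div] at hGl
  rw [div_self (ne_of_gt h2n)] at hGu
  have hmt1 : G ((j:ℝ)/2^n) ≤ G t := by
    apply hmono _ _ (by positivity) _ ht1
    rw [div_le_iff₀ h2n]; linarith
  have hmt2 : G t ≤ G (((j:ℕ)+1:ℕ)/2^n) := by
    apply hmono _ _ ht0 _ _
    · push_cast
      rw [le_div_iff₀ h2n]; linarith
    · push_cast
      rw [div_le_one h2n]
      have : ((j:ℝ)+1) ≤ (2^n : ℕ) := by exact_mod_cast hj3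
      push_cast at this; linarith
  push_cast at hGu hmt2
  have hdl : (j:ℝ) * c^n ≤ (G t - G 0)/(G 1 - G 0) := by
    rw [le_div_iff₀ hD]; nlinarith
  have hdu : (G t - G 0)/(G 1 - G 0) ≤ 1 - ((2:ℝ)^n - ((j:ℝ)+1)) * c^n := by
    rw [div_le_iff₀ hD]; nlinarith
  rw [abs_le]
  constructor
  · nlinarith [mul_le_mul_of_nonneg_right hj2 hcn0,
      mul_nonneg (sub_nonneg.mpr ht1) (sub_nonneg.mpr hc2n)]
  · nlinarith [mul_le_mul_of_nonneg_right hj1 hcn0,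
      mul_nonneg ht0 (sub_nonneg.mpr hc2n)]

lemma qs_inv (δ A B : ℝ) (hδ : 0 ≤ δ) (hA : 0 < A) (hB : 0 < B)
    (h1 : (1+δ)⁻¹ ≤ A/B) (h2 : A/B ≤ 1+δ) :
    (1+δ)⁻¹ ≤ B/A ∧ B/A ≤ 1+δ := by
  have hd : (0:ℝ) < 1+δ := by linarith
  have hAB : A ≤ (1+δ)*B := by rw [div_le_iff₀ hB] at h2; linarith
  have hBA : (1+δ)⁻¹ * B ≤ A := by rw [le_div_iff₀ hB] at h1; linarith
  constructor
  · rw [le_div_iff₀ hA]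
    nlinarith [mul_inv_cancel₀ hd.ne', mul_le_mul_of_nonneg_left hAB (inv_pos.mpr hd).le]
  · rw [div_le_iff₀ hA]
    nlinarith [mul_inv_cancel₀ hd.ne', mul_le_mul_of_nonneg_left hBA hd.le]

lemma qs_combine (δ E ε φ k r : ℝ) (hδ : 0 ≤ δ) (hk0 : 0 < k) (hk1 : k ≤ 1)
    (hφ : |φ - k| ≤ E) (hr1 : (1+δ)⁻¹ ≤ r) (hr2 : r ≤ 1+δ)
    (hE : E*(1+δ) + δ ≤ ε) : |φ*r - k| ≤ ε := by
  have hd : (0:ℝ) < 1+δ := by linarith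
  have hE0 : 0 ≤ E := le_trans (abs_nonneg _) hφ
  have hr0 : 0 < r := lt_of_lt_of_le (inv_pos.mpr hd) hr1
  have hkr : 1 ≤ (1+δ)*r := by
    nlinarith [mul_le_mul_of_nonneg_left hr1 hd.le, mul_inv_cancel₀ hd.ne']
  have hrl : 1 - δ ≤ r := by nlinarith
  rw [abs_le] at hφ ⊢
  obtain ⟨hφ1, hφ2⟩ := hφ
  constructor
  · nlinarith [mul_le_mul_of_nonneg_right hφ1 hr0.le, mul_nonneg hk0.le (sub_nonneg.mpr hrl)]
  · nlinarith [mul_le_mul_of_nonneg_right hφ2 hr0.le, mul_nonneg hk0.le hδ]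

set_option maxHeartbeats 1000000 in
theorem stmt_1 :
    ∀ ε : ℝ, 0 < ε → ∃ δ : ℝ, 0 < δ ∧
      ∀ (x y : ℝ) (H : ℝ → ℝ), 0 < y →
        StrictMonoOn H (Set.Icc (x - y) (x + y)) →
        ContinuousOn H (Set.Icc (x - y) (x + y)) →
        (∀ u s : ℝ, 0 < s → u - s ∈ Set.Icc (x - y) (x + y) →
          u ∈ Set.Icc (x - y) (x + y) → u + s ∈ Set.Icc (x - y) (x + y) →
          (1 + δ)⁻¹ ≤ (H (u + s) - H u) / (H u - H (u - s)) ∧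
            (H (u + s) - H u) / (H u - H (u - s)) ≤ 1 + δ) →
        ∀ k : ℝ, 0 < k → k ≤ 1 →
          |(H (x + k * y) - H x) / (H x - H (x - y)) - k| ≤ ε ∧
          |(H x - H (x - k * y)) / (H (x + y) - H x) - k| ≤ ε := by
  intro ε hε
  obtain ⟨n, hn⟩ := exists_nat_gt (4/ε)
  have hn2 : (4:ℝ)/ε < 2^n := lt_of_lt_of_le hn (by exact_mod_cast (Nat.lt_two_pow_self (n := n)).le)
  have h2n : (0:ℝ) < 2^n := by positivity
  have hhalfn : ((1:ℝ)/2)^n ≤ ε/4 := by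
    rw [div_pow, one_pow, div_le_div_iff₀ h2n (by norm_num)]
    rw [div_lt_iff₀ hε] at hn2
    nlinarith
  set δ : ℝ := min 1 (ε/(2*(n+1))) with hδ_def
  have hδ0 : 0 < δ := lt_min one_pos (by positivity)
  have hδ1 : δ ≤ 1 := min_le_left _ _
  have hδε : (n+1)*δ ≤ ε/2 := by
    have h1 : δ ≤ ε/(2*(n+1)) := min_le_right _ _
    have h2 : (0:ℝ) < n+1 := by positivity
    calc ((n:ℝ)+1)*δ ≤ ((n:ℝ)+1)*(ε/(2*((n:ℝ)+1))) := by
          apply mul_le_mul_of_nonneg_left h1 (by positivity)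
      _ = ε/2 := by field_simp
  clear_value δ
  set E : ℝ := (1 - 2^n * ((2+δ)⁻¹)^n) + (1/2)^n with hE_def
  clear_value E
  have hd2 : (0:ℝ) < 2+δ := by linarith
  have hber : 1 - (n:ℝ)*(δ/2) ≤ 2^n * ((2+δ)⁻¹)^n := by
    have h1 : (1:ℝ) + n*(-(δ/2)) ≤ (1 + -(δ/2))^n :=
      one_add_mul_le_pow (by linarith) n
    have h2 : ((1:ℝ) - δ/2)^n ≤ (2*(2+δ)⁻¹)^n := by
      apply pow_le_pow_left₀ (by linarith)
      rw [le_mul_inv_iff₀ hd2]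
      nlinarith
    rw [mul_pow] at h2
    calc (1:ℝ) - n*(δ/2) = 1 + n*(-(δ/2)) := by ring
      _ ≤ (1 + -(δ/2))^n := h1
      _ = (1 - δ/2)^n := by ring_nf
      _ ≤ _ := h2
  have hEε : E*(1+δ) + δ ≤ ε := by
    have hE2 : E ≤ (n:ℝ)*(δ/2) + ε/4 := by
      rw [hE_def]; linarith
    have hE0 : 0 ≤ E := by
      rw [hE_def]
      have : 2^n * ((2+δ)⁻¹)^n ≤ 1 := by
        rw [← mul_pow]
        apply pow_le_one₀ (by positivity)
        rw [mul_inv_le_iff₀ hd2]; linarith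
      have h3 : (0:ℝ) ≤ (1/2:ℝ)^n := by positivity
      linarith
    have hEδ : E*δ ≤ E*1 := mul_le_mul_of_nonneg_left hδ1 hE0
    nlinarith
  refine ⟨δ, hδ0, ?_⟩
  intro x y H hy hmono hcont hqs k hk0 hk1
  clear hcont
  have hmem1 : ∀ p : ℝ, 0 ≤ p → p ≤ 1 → x + p*y ∈ Set.Icc (x-y) (x+y) := by
    intro p h0 h1
    have l1 : 0 ≤ p*y := mul_nonneg h0 hy.le
    have l2 : p*y ≤ y := by nlinarith
    exact ⟨by linarith, by linarith⟩
  have hmem2 : ∀ p : ℝ, 0 ≤ p → p ≤ 1 → x - p*y ∈ Set.Icc (x-y) (x+y) := by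
    intro p h0 h1
    have l1 : 0 ≤ p*y := mul_nonneg h0 hy.le
    have l2 : p*y ≤ y := by nlinarith
    exact ⟨by linarith, by linarith⟩
  have hlt1 : ∀ p q : ℝ, 0 ≤ p → p < q → q ≤ 1 → 0 < H (x + q*y) - H (x + p*y) := by
    intro p q h0 hpq h1
    have := hmono (hmem1 p h0 (by linarith)) (hmem1 q (by linarith) h1)
      (by have := mul_lt_mul_of_pos_right hpq hy; linarith)
    linarith
  have hlt2 : ∀ p q : ℝ, 0 ≤ p → p < q → q ≤ 1 → 0 < H (x - p*y) - H (x - q*y) := by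
    intro p q h0 hpq h1
    have := hmono (hmem2 q (by linarith) h1) (hmem2 p h0 (by linarith))
      (by have := mul_lt_mul_of_pos_right hpq hy; linarith)
    linarith
  have ha : 0 < H x - H (x - y) := by
    have := hlt2 0 1 le_rfl one_pos le_rfl
    norm_num at this
    linarith
  have hb : 0 < H (x + y) - H x := by
    have := hlt1 0 1 le_rfl one_pos le_rfl
    norm_num at this
    linarith
  have hr := hqs x y hy ⟨le_rfl, by linarith⟩ ⟨by linarith, by linarith⟩ ⟨by linarith, le_rfl⟩
  constructor
  · -- positive side
    set G : ℝ → ℝ := fun t => H (x + t*y) with hG_def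
    have hpos : ∀ p q : ℝ, 0 ≤ p → p < q → q ≤ 1 → 0 < G q - G p := by
      intro p q hp hpq hq
      exact hlt1 p q hp hpq hq
    have hhalf : ∀ p q : ℝ, 0 ≤ p → p < q → q ≤ 1 →
        (1+δ)⁻¹ ≤ (G q - G ((p+q)/2)) / (G ((p+q)/2) - G p) ∧
          (G q - G ((p+q)/2)) / (G ((p+q)/2) - G p) ≤ 1+δ := by
      intro p q hp hpq hq
      have hs : 0 < (q-p)/2*y := by
        apply mul_pos (by linarith) hy
      have h := hqs (x + (p+q)/2*y) ((q-p)/2*y) hs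
        (by rw [show x + (p+q)/2*y - (q-p)/2*y = x + p*y by ring]
            exact hmem1 p hp (by linarith))
        (hmem1 ((p+q)/2) (by linarith) (by linarith))
        (by rw [show x + (p+q)/2*y + (q-p)/2*y = x + q*y by ring]
            exact hmem1 q (by linarith) hq)
      rw [show x + (p+q)/2*y + (q-p)/2*y = x + q*y by ring,
          show x + (p+q)/2*y - (q-p)/2*y = x + p*y by ring] at h
      exact h
    have hkey := qs_key δ hδ0.le G hpos hhalf n k hk0.le hk1
    have hG0 : G 0 = H x := by rw [hG_def]; norm_num
    have hG1 : G 1 = H (x+y) := by rw [hG_def]; norm_num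
    have hGk : G k = H (x + k*y) := rfl
    rw [hG0, hG1, hGk, ← hE_def] at hkey
    have heq : (H (x + k*y) - H x) / (H x - H (x-y)) =
        ((H (x + k*y) - H x) / (H (x+y) - H x)) * ((H (x+y) - H x)/(H x - H (x-y))) := by
      rw [div_mul_div_comm, mul_comm (H (x+y) - H x), mul_div_mul_right _ _ (ne_of_gt hb)]
    rw [heq]
    exact qs_combine δ E ε _ k _ hδ0.le hk0 hk1 hkey hr.1 hr.2 hEε
  · -- negative side
    set G : ℝ → ℝ := fun t => -H (x - t*y) with hG_def
    have hpos : ∀ p q : ℝ, 0 ≤ p → p < q → q ≤ 1 → 0 < G q - G p := by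
      intro p q hp hpq hq
      have := hlt2 p q hp hpq hq
      simp only [hG_def]
      linarith
    have hhalf : ∀ p q : ℝ, 0 ≤ p → p < q → q ≤ 1 →
        (1+δ)⁻¹ ≤ (G q - G ((p+q)/2)) / (G ((p+q)/2) - G p) ∧
          (G q - G ((p+q)/2)) / (G ((p+q)/2) - G p) ≤ 1+δ := by
      intro p q hp hpq hq
      have hs : 0 < (q-p)/2*y := by
        apply mul_pos (by linarith) hy
      have h := hqs (x - (p+q)/2*y) ((q-p)/2*y) hs
        (by rw [show x - (p+q)/2*y - (q-p)/2*y = x - q*y by ring]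
            exact hmem2 q (by linarith) hq)
        (hmem2 ((p+q)/2) (by linarith) (by linarith))
        (by rw [show x - (p+q)/2*y + (q-p)/2*y = x - p*y by ring]
            exact hmem2 p hp (by linarith))
      rw [show x - (p+q)/2*y + (q-p)/2*y = x - p*y by ring,
          show x - (p+q)/2*y - (q-p)/2*y = x - q*y by ring] at h
      have hA : 0 < H (x - p*y) - H (x - (p+q)/2*y) :=
        hlt2 p ((p+q)/2) hp (by linarith) (by linarith)
      have hB : 0 < H (x - (p+q)/2*y) - H (x - q*y) :=
        hlt2 ((p+q)/2) q (by linarith) (by linarith) hq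
      have hinv := qs_inv δ _ _ hδ0.le hA hB h.1 h.2
      have e1 : G q - G ((p+q)/2) = H (x - (p+q)/2*y) - H (x - q*y) := by
        simp only [hG_def]; ring
      have e2 : G ((p+q)/2) - G p = H (x - p*y) - H (x - (p+q)/2*y) := by
        simp only [hG_def]; ring
      rw [e1, e2]
      exact hinv
    have hkey := qs_key δ hδ0.le G hpos hhalf n k hk0.le hk1
    have hG0 : G 0 = -H x := by rw [hG_def]; norm_num
    have hG1 : G 1 = -H (x-y) := by rw [hG_def]; norm_num
    have hGk : G k = -H (x - k*y) := rfl
    rw [hG0, hG1, hGk, ← hE_def] at hkey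
    have e3 : (-H (x - k*y) - -H x) / (-H (x-y) - -H x) =
        (H x - H (x - k*y)) / (H x - H (x-y)) := by ring_nf
    rw [e3] at hkey
    have hr' := qs_inv δ _ _ hδ0.le hb ha hr.1 hr.2
    have heq : (H x - H (x - k*y)) / (H (x+y) - H x) =
        ((H x - H (x - k*y)) / (H x - H (x-y))) * ((H x - H (x-y))/(H (x+y) - H x)) := by
      rw [div_mul_div_comm, mul_comm (H x - H (x-y)), mul_div_mul_right _ _ (ne_of_gt ha)]
    rw [heq]
    exact qs_combine δ E ε _ k _ hδ0.le hk0 hk1 hkey hr'.1 hr'.2 hEε
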